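/- Let e be an edge of a rooted spanning tree T and let e' be a descendant edge of e. If w(T_e) ≥ 2·w(T_{e'}, V \ T_e), then the weight of the cut determined by {e,e'} is at least w(T_{e'}). -/
import Mathlib


open Finset

/-- Total weight of graph edges with one endpoint in `A` and the other in `B`
(summed over ordered pairs). -/
def betw {V : Type*} [Fintype V] (w : V → V → ℝ) (A B : Finset V) : ℝ :=
  ∑ u ∈ A, ∑ v ∈ B, w u v

/-- Weight of the cut `(S, V \\ S)`: total weight of edges leaving `S`. -/
def cutw {V : Type*} [Fintype V] [DecidableEq V] (w : V → V → ℝ) (S : Finset V) : ℝ :=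
  betw w S Sᶜ

lemma betw_union_right {V : Type*} [Fintype V] [DecidableEq V] (w : V → V → ℝ)
    (A B C : Finset V) (h : Disjoint B C) :
    betw w A (B ∪ C) = betw w A B + betw w A C := by
  simp [betw, Finset.sum_union h, Finset.sum_add_distrib]

lemma betw_union_left {V : Type*} [Fintype V] [DecidableEq V] (w : V → V → ℝ)
    (A B C : Finset V) (h : Disjoint A B) :
    betw w (A ∪ B) C = betw w A C + betw w B C := by
  simp [betw, Finset.sum_union h]

lemma betw_comm {V : Type*} [Fintype V] (w : V → V → ℝ)
    (hsym : ∀ u v, w u v = w v u) (A B : Finset V) :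
    betw w A B = betw w B A := by
  rw [betw, betw, Finset.sum_comm]
  simp [hsym]

/-- For a tree edge `e` and a descendant edge `e'` (subtrees `Te' ⊆ Te`):
if `w(Te) ≥ 2 w(Te', V \ Te)` (i.e. `e` is not down-interested in `e'`), then
the cut determined by {e,e'} weighs at least the cut determined by `e'` alone. -/
theorem stmt_3 {V : Type*} [Fintype V] [DecidableEq V] (w : V → V → ℝ)
    (hsym : ∀ u v, w u v = w v u) (hnn : ∀ u v, 0 ≤ w u v)
    (Te Te' : Finset V) (hsub : Te' ⊆ Te)
    (hni : 2 * betw w Te' Teᶜ ≤ cutw w Te) :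
    cutw w Te' ≤ cutw w (Te \ Te') := by
  have h1 : Te'ᶜ = Teᶜ ∪ (Te \ Te') := by
    ext x
    simp only [Finset.mem_compl, Finset.mem_union, Finset.mem_sdiff]
    by_cases hx : x ∈ Te <;> tauto
  have h2 : (Te \ Te')ᶜ = Teᶜ ∪ Te' := by
    ext x
    simp only [Finset.mem_compl, Finset.mem_union, Finset.mem_sdiff]
    by_cases hx : x ∈ Te
    · constructor
      · intro h; right; by_contra hc; exact h ⟨hx, hc⟩
      · rintro (h | h) ⟨h1, h2⟩ <;> [exact h hx; exact h2 h]
    · constructor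
      · intro _; exact Or.inl hx
      · rintro _ ⟨h1, _⟩; exact hx h1
  have hd1 : Disjoint Teᶜ (Te \ Te') :=
    Finset.disjoint_left.mpr fun x hx hx2 => (Finset.mem_compl.mp hx) (Finset.mem_sdiff.mp hx2).1
  have hd2 : Disjoint Teᶜ Te' :=
    Finset.disjoint_left.mpr fun x hx hx2 => (Finset.mem_compl.mp hx) (hsub hx2)
  have hTe : Te = Te' ∪ (Te \ Te') := by
    rw [Finset.union_sdiff_of_subset hsub]
  have hd3 : Disjoint Te' (Te \ Te') := Finset.disjoint_sdiff
  have hcutTe : cutw w Te = betw w Te' Teᶜ + betw w (Te \ Te') Teᶜ := by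
    rw [cutw, hTe, betw_union_left _ _ _ _ hd3, ← hTe]
  have key : betw w Te' Teᶜ ≤ betw w (Te \ Te') Teᶜ := by linarith [hcutTe, hni]
  have e1 : cutw w Te' = betw w Te' Teᶜ + betw w Te' (Te \ Te') := by
    rw [cutw, h1, betw_union_right _ _ _ _ hd1]
  have e2 : cutw w (Te \ Te') = betw w (Te \ Te') Teᶜ + betw w Te' (Te \ Te') := by
    rw [cutw, h2, betw_union_right _ _ _ _ hd2, betw_comm w hsym (Te \ Te') Te']
  linarith
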